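/- Let ν be a Borel probability on X satisfying, for all continuous f and all n, ∫ f dν = ∫ (Λ_n)^{-1} E_μ(Λ_n f | F_n) dν, where Λ_n = H^{-β[n]} λ^{[n]}. If H and p are Hölder continuous and positive, then ν = ν_β, the unique probability with ℒ_{-β log H}^*(ν_β) = λ_β ν_β. -/

import Mathlib

open MeasureTheory Finset

/-- The full shift space `{1,…,k}^ℕ`, modeled as `ℕ → Fin k`. -/
abbrev ShiftSpace (k : ℕ) := ℕ → Fin k

/-- The left shift `T`. -/
def shiftT {k : ℕ} (x : ShiftSpace k) : ShiftSpace k := fun n => x (n + 1)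

/-- Prepending a symbol: the `k` preimages of `x` under the shift are `consS i x`. -/
def consS {k : ℕ} (i : Fin k) (x : ShiftSpace k) : ShiftSpace k :=
  fun n => Nat.casesOn n i x

/-- The Ruelle operator `ℒ_p f (x) = ∑_{T z = x} p z · f z` on complex functions. -/
noncomputable def ruelleOp {k : ℕ} (p : ShiftSpace k → ℝ) (f : ShiftSpace k → ℂ) :
    ShiftSpace k → ℂ :=
  fun x => ∑ i : Fin k, (p (consS i x) : ℂ) * f (consS i x)

/-- The Ruelle operator on real functions. -/
noncomputable def ruelleOpR {k : ℕ} (p : ShiftSpace k → ℝ) (f : ShiftSpace k → ℝ) :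
    ShiftSpace k → ℝ :=
  fun x => ∑ i : Fin k, p (consS i x) * f (consS i x)

/-- Hölder continuity with respect to the standard ultrametric on the shift space:
`|f x - f y| ≤ C · 2^{-α n}` whenever `x` and `y` agree on the first `n` coordinates. -/
def HolderSeq {k : ℕ} (f : ShiftSpace k → ℝ) : Prop :=
  ∃ C α : ℝ, 0 < α ∧ ∀ x y : ShiftSpace k, ∀ n : ℕ,
    (∀ m < n, x m = y m) → |f x - f y| ≤ C * (2 : ℝ) ^ (-(α * n))

/-- `λ^{-[n]}(x) = ∏_{i<n} p(T^i x)`. -/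
noncomputable def lamInv {k : ℕ} (p : ShiftSpace k → ℝ) (n : ℕ) (x : ShiftSpace k) : ℝ :=
  ∏ i ∈ Finset.range n, p (shiftT^[i] x)

/-- `H^{β[n]}(x) = ∏_{i<n} H(T^i x)^β`. -/
noncomputable def hPow {k : ℕ} (H : ShiftSpace k → ℝ) (β : ℝ) (n : ℕ)
    (x : ShiftSpace k) : ℝ :=
  ∏ i ∈ Finset.range n, H (shiftT^[i] x) ^ β

/-- `Λ_n = H^{-β[n]} · λ^{[n]}`. -/
noncomputable def lambdaN {k : ℕ} (p H : ShiftSpace k → ℝ) (β : ℝ) (n : ℕ)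
    (x : ShiftSpace k) : ℝ :=
  hPow H (-β) n x * (lamInv p n x)⁻¹

/-- The Ruelle operator `ℒ_{-β log H}` on real functions. -/
noncomputable def ruelleH {k : ℕ} (H : ShiftSpace k → ℝ) (β : ℝ) (f : ShiftSpace k → ℝ) :
    ShiftSpace k → ℝ :=
  fun x => ∑ i : Fin k, H (consS i x) ^ (-β) * f (consS i x)

lemma shiftT_consS {k : ℕ} (i : Fin k) (x : ShiftSpace k) : shiftT (consS i x) = x := rfl

lemma continuous_consS {k : ℕ} (i : Fin k) : Continuous (consS (k := k) i) := by
  apply continuous_pi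
  intro n
  cases n with
  | zero => exact continuous_const
  | succ m => exact continuous_apply m

lemma continuous_shiftT {k : ℕ} : Continuous (shiftT (k := k)) :=
  continuous_pi fun n => continuous_apply (n + 1)

lemma lambdaN_succ {k : ℕ} (p H : ShiftSpace k → ℝ) (β : ℝ) (n : ℕ)
    (z : ShiftSpace k) :
    lambdaN p H β (n + 1) z = H z ^ (-β) * (p z)⁻¹ * lambdaN p H β n (shiftT z) := by
  unfold lambdaN hPow lamInv
  rw [Finset.prod_range_succ', Finset.prod_range_succ']
  simp only [Function.iterate_succ_apply, Function.iterate_zero_apply, mul_inv]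
  ring

lemma key_op {k : ℕ} (p H : ShiftSpace k → ℝ) (hp_pos : ∀ x, 0 < p x) (β : ℝ) :
    ∀ (n : ℕ) (f : ShiftSpace k → ℝ),
      (ruelleOpR p)^[n] (fun z => lambdaN p H β n z * f z) = (ruelleH H β)^[n] f := by
  intro n
  induction n with
  | zero => intro f; funext x; simp [lambdaN, hPow, lamInv]
  | succ n ih =>
    intro f
    rw [Function.iterate_succ_apply, Function.iterate_succ_apply]
    have h : ruelleOpR p (fun z => lambdaN p H β (n + 1) z * f z)
        = fun x => lambdaN p H β n x * ruelleH H β f x := by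
      funext x
      unfold ruelleOpR ruelleH
      rw [Finset.mul_sum]
      refine Finset.sum_congr rfl fun i _ => ?_
      dsimp only
      rw [lambdaN_succ p H β n (consS i x), shiftT_consS]
      have hpne : p (consS i x) ≠ 0 := (hp_pos _).ne'
      field_simp
    rw [h]
    exact ih (ruelleH H β f)

lemma key_eig {k : ℕ} (H : ShiftSpace k → ℝ) (β lamβ : ℝ) (hβf : ShiftSpace k → ℝ)
    (hβf_eig : ∀ x, ruelleH H β hβf x = lamβ * hβf x) :
    ∀ n : ℕ, (ruelleH H β)^[n] hβf = fun x => lamβ ^ n * hβf x := by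
  intro n
  induction n with
  | zero => funext x; simp
  | succ n ih =>
    rw [Function.iterate_succ_apply', ih]
    funext x
    unfold ruelleH
    have h1 : (∑ i : Fin k, H (consS i x) ^ (-β) * (lamβ ^ n * hβf (consS i x)))
        = lamβ ^ n * ∑ i : Fin k, H (consS i x) ^ (-β) * hβf (consS i x) := by
      rw [Finset.mul_sum]; exact Finset.sum_congr rfl fun i _ => by ring
    rw [h1]
    have := hβf_eig x
    unfold ruelleH at this
    rw [this]
    ring

lemma lamInv_pos {k : ℕ} {p : ShiftSpace k → ℝ} (hp_pos : ∀ x, 0 < p x) (n : ℕ)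
    (x : ShiftSpace k) : 0 < lamInv p n x :=
  Finset.prod_pos fun _ _ => hp_pos _

lemma hPow_pos {k : ℕ} {H : ShiftSpace k → ℝ} (hH_pos : ∀ x, 0 < H x) (β : ℝ) (n : ℕ)
    (x : ShiftSpace k) : 0 < hPow H β n x :=
  Finset.prod_pos fun _ _ => Real.rpow_pos_of_pos (hH_pos _) _

lemma lambdaN_pos {k : ℕ} {p H : ShiftSpace k → ℝ} (hp_pos : ∀ x, 0 < p x)
    (hH_pos : ∀ x, 0 < H x) (β : ℝ) (n : ℕ) (x : ShiftSpace k) :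
    0 < lambdaN p H β n x :=
  mul_pos (hPow_pos hH_pos _ n x) (inv_pos.2 (lamInv_pos hp_pos n x))

lemma continuous_lamInv {k : ℕ} {p : ShiftSpace k → ℝ} (hp_cont : Continuous p) (n : ℕ) :
    Continuous (lamInv p n) :=
  continuous_finset_prod _ fun i _ => hp_cont.comp (continuous_shiftT.iterate i)

lemma continuous_hPow {k : ℕ} {H : ShiftSpace k → ℝ} (hH_cont : Continuous H)
    (hH_pos : ∀ x, 0 < H x) (β : ℝ) (n : ℕ) : Continuous (hPow H β n) :=
  continuous_finset_prod _ fun i _ =>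
    Continuous.rpow_const (hH_cont.comp (continuous_shiftT.iterate i))
      fun x => Or.inl (hH_pos _).ne'

lemma continuous_lambdaN {k : ℕ} {p H : ShiftSpace k → ℝ} (hp_cont : Continuous p)
    (hp_pos : ∀ x, 0 < p x) (hH_cont : Continuous H) (hH_pos : ∀ x, 0 < H x)
    (β : ℝ) (n : ℕ) : Continuous (lambdaN p H β n) :=
  (continuous_hPow hH_cont hH_pos _ n).mul
    (Continuous.inv₀ (continuous_lamInv hp_cont n) fun x => (lamInv_pos hp_pos n x).ne')

lemma continuous_ruelleH {k : ℕ} {H : ShiftSpace k → ℝ} (hH_cont : Continuous H)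
    (hH_pos : ∀ x, 0 < H x) (β : ℝ) {f : ShiftSpace k → ℝ} (hf : Continuous f) :
    Continuous (ruelleH H β f) :=
  continuous_finset_sum _ fun i _ =>
    (Continuous.rpow_const (hH_cont.comp (continuous_consS i))
      fun x => Or.inl (hH_pos _).ne').mul (hf.comp (continuous_consS i))

lemma continuous_ruelleH_iter {k : ℕ} {H : ShiftSpace k → ℝ} (hH_cont : Continuous H)
    (hH_pos : ∀ x, 0 < H x) (β : ℝ) {f : ShiftSpace k → ℝ} (hf : Continuous f) (n : ℕ) :
    Continuous ((ruelleH H β)^[n] f) := by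
  induction n with
  | zero => exact hf
  | succ n ih =>
    rw [Function.iterate_succ_apply']
    exact continuous_ruelleH hH_cont hH_pos β ih

theorem kms_measure_unique {k : ℕ} [NeZero k]
    (p : ShiftSpace k → ℝ) (hp_cont : Continuous p) (hp_pos : ∀ x, 0 < p x)
    (hp_norm : ∀ x : ShiftSpace k, ∑ i : Fin k, p (consS i x) = 1)
    (hp_hold : HolderSeq fun x => Real.log (p x))
    (μ : Measure (ShiftSpace k)) [IsProbabilityMeasure μ]
    (hμ : ∀ f : ShiftSpace k → ℝ, Continuous f →
      ∫ x, ruelleOpR p f x ∂μ = ∫ x, f x ∂μ)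
    (H : ShiftSpace k → ℝ) (hH_cont : Continuous H) (hH_pos : ∀ x, 0 < H x)
    (hH_hold : HolderSeq fun x => Real.log (H x))
    (β lamβ : ℝ) (hlam : 0 < lamβ)
    (νβ : Measure (ShiftSpace k)) [IsProbabilityMeasure νβ]
    (hνβ : ∀ f : ShiftSpace k → ℝ, Continuous f →
      ∫ x, ruelleH H β f x ∂νβ = lamβ * ∫ x, f x ∂νβ)
    (hβf : ShiftSpace k → ℝ) (hβf_cont : Continuous hβf) (hβf_pos : ∀ x, 0 < hβf x)
    (hβf_norm : ∫ x, hβf x ∂νβ = 1)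
    (hβf_eig : ∀ x, ruelleH H β hβf x = lamβ * hβf x)
    (hRPF : ∀ f : ShiftSpace k → ℝ, Continuous f → ∀ ε > (0 : ℝ), ∃ N : ℕ,
      ∀ n ≥ N, ∀ x : ShiftSpace k,
        |(ruelleH H β)^[n] f x / lamβ ^ n - hβf x * ∫ y, f y ∂νβ| ≤ ε)
    (ν : Measure (ShiftSpace k)) [IsProbabilityMeasure ν]
    (hν : ∀ f : ShiftSpace k → ℝ, Continuous f → ∀ n : ℕ,
      ∫ x, f x ∂ν =
        ∫ x, (lambdaN p H β n x)⁻¹ *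
          (ruelleOpR p)^[n] (fun z => lambdaN p H β n z * f z) (shiftT^[n] x) ∂ν) :
    ν = νβ := by
  have integν : ∀ g : ShiftSpace k → ℝ, Continuous g → Integrable g ν :=
    fun g hg => hg.integrable_of_hasCompactSupport (HasCompactSupport.of_compactSpace g)
  have integνβ : ∀ g : ShiftSpace k → ℝ, Continuous g → Integrable g νβ :=
    fun g hg => hg.integrable_of_hasCompactSupport (HasCompactSupport.of_compactSpace g)
  obtain ⟨x₀, -, hx₀⟩ := isCompact_univ.exists_isMinOn Set.univ_nonempty hβf_cont.continuousOn
  have hcpos : 0 < hβf x₀ := hβf_pos x₀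
  have hcle : ∀ x, hβf x₀ ≤ hβf x := fun x => hx₀ (Set.mem_univ x)
  have hJh0 : 0 ≤ ∫ x, hβf x ∂ν := integral_nonneg fun x => (hβf_pos x).le
  have hbid : ∀ n : ℕ,
      (∫ x, hβf x ∂ν) = ∫ x, (lambdaN p H β n x)⁻¹ * (lamβ ^ n * hβf (shiftT^[n] x)) ∂ν := by
    intro n
    have h := hν hβf hβf_cont n
    rw [key_op p H hp_pos β n hβf, key_eig H β lamβ hβf hβf_eig n] at h
    exact h
  have contInt : ∀ (g : ShiftSpace k → ℝ), Continuous g → ∀ n : ℕ,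
      Continuous (fun x => (lambdaN p H β n x)⁻¹ * g (shiftT^[n] x)) := fun g hg n =>
    (Continuous.inv₀ (continuous_lambdaN hp_cont hp_pos hH_cont hH_pos β n)
        fun x => (lambdaN_pos hp_pos hH_pos β n x).ne').mul
      (hg.comp (continuous_shiftT.iterate n))
  have main : ∀ f : ShiftSpace k → ℝ, Continuous f →
      ∫ x, f x ∂ν = (∫ x, f x ∂νβ) * ∫ x, hβf x ∂ν := by
    intro f hf
    set I := ∫ x, f x ∂νβ with hI
    set Jh := ∫ x, hβf x ∂ν with hJh
    have key : ∀ ε > (0:ℝ), |(∫ x, f x ∂ν) - I * Jh| ≤ ε * (Jh / hβf x₀) := by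
      intro ε hε
      obtain ⟨N, hN⟩ := hRPF f hf ε hε
      have hN' := hN N le_rfl
      set g1 : ShiftSpace k → ℝ :=
        fun x => (lambdaN p H β N x)⁻¹ * (ruelleH H β)^[N] f (shiftT^[N] x) with hg1
      set g2 : ShiftSpace k → ℝ :=
        fun x => (lambdaN p H β N x)⁻¹ * (lamβ ^ N * hβf (shiftT^[N] x)) with hg2
      have hg1c : Continuous g1 := contInt _ (continuous_ruelleH_iter hH_cont hH_pos β hf N) N
      have hg2c : Continuous g2 := contInt (fun y => lamβ ^ N * hβf y)
        (continuous_const.mul hβf_cont) N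
      have h1 : ∫ x, f x ∂ν = ∫ x, g1 x ∂ν := by
        have h := hν f hf N
        rw [key_op p H hp_pos β N f] at h
        exact h
      have hint1 : ∫ x, g2 x ∂ν = Jh := (hbid N).symm
      have hpt : ∀ x, |g1 x - I * g2 x| ≤ (ε / hβf x₀) * g2 x := by
        intro x
        have hΛ : 0 < (lambdaN p H β N x)⁻¹ := inv_pos.2 (lambdaN_pos hp_pos hH_pos β N x)
        have hrpf := hN' (shiftT^[N] x)
        have hlamN : (0:ℝ) < lamβ ^ N := pow_pos hlam N
        have hX : 0 < (lambdaN p H β N x)⁻¹ * lamβ ^ N := mul_pos hΛ hlamN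
        have e1 : g1 x - I * g2 x
            = (lambdaN p H β N x)⁻¹ * lamβ ^ N *
              ((ruelleH H β)^[N] f (shiftT^[N] x) / lamβ ^ N - hβf (shiftT^[N] x) * I) := by
          simp only [hg1, hg2]
          have hd := div_mul_cancel₀ ((ruelleH H β)^[N] f (shiftT^[N] x)) hlamN.ne'
          linear_combination (-(lambdaN p H β N x)⁻¹) * hd
        rw [e1, abs_mul, abs_of_pos hX]
        calc (lambdaN p H β N x)⁻¹ * lamβ ^ N *
              |(ruelleH H β)^[N] f (shiftT^[N] x) / lamβ ^ N - hβf (shiftT^[N] x) * I|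
            ≤ (lambdaN p H β N x)⁻¹ * lamβ ^ N * ε :=
              mul_le_mul_of_nonneg_left hrpf hX.le
          _ ≤ (ε / hβf x₀) * g2 x := by
              simp only [hg2]
              rw [div_mul_eq_mul_div, le_div_iff₀ hcpos]
              nlinarith [mul_le_mul_of_nonneg_left (hcle (shiftT^[N] x)) (mul_pos hX hε).le]
      have e2 : (∫ x, f x ∂ν) - I * Jh = ∫ x, (g1 x - I * g2 x) ∂ν := by
        rw [integral_sub (integν _ hg1c) ((integν _ hg2c).const_mul I),
          integral_const_mul, hint1, h1]
      calc |(∫ x, f x ∂ν) - I * Jh| = |∫ x, (g1 x - I * g2 x) ∂ν| := by rw [e2]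
        _ ≤ ∫ x, |g1 x - I * g2 x| ∂ν := by
            simpa [Real.norm_eq_abs] using
              norm_integral_le_integral_norm (μ := ν) (fun x => g1 x - I * g2 x)
        _ ≤ ∫ x, (ε / hβf x₀) * g2 x ∂ν :=
            integral_mono ((integν _ hg1c).sub ((integν _ hg2c).const_mul I)).abs
              ((integν _ hg2c).const_mul _) hpt
        _ = (ε / hβf x₀) * Jh := by rw [integral_const_mul, hint1]
        _ = ε * (Jh / hβf x₀) := by ring
    by_contra hne
    have habs : 0 < |(∫ x, f x ∂ν) - I * Jh| := abs_pos.2 (sub_ne_zero.2 hne)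
    have hM : 0 ≤ Jh / hβf x₀ := div_nonneg hJh0 hcpos.le
    have hk := key (|(∫ x, f x ∂ν) - I * Jh| / (Jh / hβf x₀ + 1)) (by positivity)
    rw [div_mul_eq_mul_div, le_div_iff₀ (by linarith)] at hk
    nlinarith
  have hJh1 : (∫ x, hβf x ∂ν) = 1 := by
    have h := main (fun _ => 1) continuous_const
    simp [integral_const] at h
    linarith
  have hfeq : ∀ f : ShiftSpace k → ℝ, Continuous f → ∫ x, f x ∂ν = ∫ x, f x ∂νβ := by
    intro f hf
    rw [main f hf, hJh1, mul_one]
  apply ext_of_forall_lintegral_eq_of_IsFiniteMeasure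
  intro f
  have hfc : Continuous fun x => (f x : ℝ) := NNReal.continuous_coe.comp f.continuous
  rw [lintegral_coe_eq_integral _ (integν _ hfc), lintegral_coe_eq_integral _ (integνβ _ hfc),
    hfeq _ hfc]
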